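/- Let X and Y be compact metric spaces. If for every ε > 0 there exists a bijection f : X → Y such that e^{-ε}·d_X(x,x') ≤ d_Y(f x, f x') ≤ e^{ε}·d_X(x,x') for all x, x' ∈ X, then X and Y are isometric (there exists a bijective isometry from X onto Y). -/

import Mathlib

/-- If compact metric spaces `X` and `Y` admit, for every `ε > 0`, a bijection
`f : X → Y` with `exp (-ε) * d x x' ≤ d (f x) (f x') ≤ exp ε * d x x'`, then
`X` and `Y` are isometric (there is a bijective isometry from `X` onto `Y`). -/
theorem lipschitz_dist_zero_implies_isometric
    {X Y : Type*} [MetricSpace X] [CompactSpace X] [MetricSpace Y] [CompactSpace Y]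
    (h : ∀ ε : ℝ, 0 < ε → ∃ f : X → Y, Function.Bijective f ∧
      ∀ x x' : X, Real.exp (-ε) * dist x x' ≤ dist (f x) (f x') ∧
        dist (f x) (f x') ≤ Real.exp ε * dist x x') :
    ∃ f : X → Y, Function.Bijective f ∧ Isometry f := by
  cases isEmpty_or_nonempty X with
  | inl hX =>
    obtain ⟨f, hf, -⟩ := h 1 one_pos
    exact ⟨f, hf, fun x => isEmptyElim x⟩
  | inr hX =>
    have hY : Nonempty Y := by
      obtain ⟨f, hf, -⟩ := h 1 one_pos
      exact ⟨f (Classical.arbitrary X)⟩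
    set D := Metric.diam (Set.univ : Set X) with hD
    have hD0 : 0 ≤ D := Metric.diam_nonneg
    have key : GromovHausdorff.ghDist X Y ≤ 0 := by
      refine le_of_forall_pos_le_add fun δ δ0 => ?_
      set ε := Real.log (1 + 2 * δ / (D + 1)) with hε
      have harg : 1 < 1 + 2 * δ / (D + 1) := by
        have : 0 < 2 * δ / (D + 1) := by positivity
        linarith
      have hε0 : 0 < ε := Real.log_pos harg
      have hexp : Real.exp ε = 1 + 2 * δ / (D + 1) := Real.exp_log (by linarith)
      obtain ⟨f, hf, hdist⟩ := h ε hε0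
      set ε₂ : ℝ := (Real.exp ε - 1) * D with hε₂
      have hexp1 : 1 ≤ Real.exp ε := Real.one_le_exp hε0.le
      have H : ∀ x y : (Set.univ : Set X),
          |dist x y - dist (f x) (f y)| ≤ ε₂ := by
        intro x y
        obtain ⟨h1, h2⟩ := hdist x y
        have hdle : dist (x : X) (y : X) ≤ D :=
          Metric.dist_le_diam_of_mem (isCompact_univ.isBounded) (Set.mem_univ _) (Set.mem_univ _)
        have hdxy : dist (x : (Set.univ : Set X)) y = dist (x : X) (y : X) := rfl
        rw [abs_sub_le_iff, hdxy]
        constructor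
        · -- dist x y - dist (f x) (f y) ≤ ε₂
          have hinv : Real.exp (-ε) * Real.exp ε = 1 := by
            rw [← Real.exp_add]; simp
          have h3 : (1 - Real.exp (-ε)) ≤ Real.exp ε - 1 := by
            nlinarith [Real.exp_pos (-ε)]
          have : dist (x : X) y - dist (f x) (f y) ≤ (1 - Real.exp (-ε)) * dist (x : X) y := by
            nlinarith
          have h4 : (1 - Real.exp (-ε)) * dist (x : X) y ≤ (Real.exp ε - 1) * D := by
            have h5 : 0 ≤ 1 - Real.exp (-ε) := by
              have := Real.exp_le_one_iff.mpr (neg_nonpos.mpr hε0.le)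
              linarith
            nlinarith [dist_nonneg (x := (x : X)) (y := (y : X))]
          linarith
        · -- dist (f x) (f y) - dist x y ≤ ε₂
          have : dist (f x) (f y) - dist (x : X) y ≤ (Real.exp ε - 1) * dist (x : X) y := by
            nlinarith
          nlinarith [dist_nonneg (x := (x : X)) (y := (y : X))]
      have main : GromovHausdorff.ghDist X Y ≤ 0 + ε₂ / 2 + 0 := by
        refine GromovHausdorff.ghDist_le_of_approx_subsets
          (fun x : (Set.univ : Set X) => f x) ?_ ?_ H
        · intro x; exact ⟨x, Set.mem_univ _, by simp⟩
        · intro y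
          obtain ⟨x, hx⟩ := hf.2 y
          exact ⟨⟨x, Set.mem_univ _⟩, by simp [hx]⟩
      have hε₂δ : ε₂ / 2 ≤ δ := by
        rw [hε₂, hexp]
        have : (1 + 2 * δ / (D + 1) - 1) * D = 2 * δ * (D / (D + 1)) := by
          field_simp
          ring
        rw [this]
        have hle : D / (D + 1) ≤ 1 := by
          rw [div_le_one (by linarith)]; linarith
        nlinarith
      linarith
    have hzero : GromovHausdorff.toGHSpace X = GromovHausdorff.toGHSpace Y := by
      have : dist (GromovHausdorff.toGHSpace X) (GromovHausdorff.toGHSpace Y) = 0 :=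
        le_antisymm key dist_nonneg
      exact eq_of_dist_eq_zero this
    obtain ⟨e⟩ := GromovHausdorff.toGHSpace_eq_toGHSpace_iff_isometryEquiv.mp hzero
    exact ⟨e, e.toEquiv.bijective, e.isometry⟩
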